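/- Corollary 5: let γ ∈ ℂ be nonzero and not a negative real number, let α = arg(γ) (so α ∈ (−π, π)), let θ ∈ ℝ and Q ∈ ℂ, and set r = √|γ|·e^{iθ}. If r² − Q·r − γ = 0, then Q = √|γ|·(i + e^{i(α+π/2)})·(sin θ − tan(α/2)·cos θ); in particular Q is a real scalar multiple of the fixed nonzero complex number i + e^{i(α+π/2)}, i.e., Q lies on a fixed line through the origin determined by α. -/

import Mathlib

/-!
Corollary 5: for `γ ∈ ℂ` nonzero and not a negative real number, with `α = arg γ`,
if `r = √|γ| · e^{iθ}` satisfies `r² − Q·r − γ = 0`, then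
`Q = √|γ| · (i + e^{i(α+π/2)}) · (sin θ − tan(α/2) · cos θ)`; in particular `Q` is a
real scalar multiple of the fixed nonzero complex number `i + e^{i(α+π/2)}`, i.e. `Q`
lies on a fixed line through the origin determined by `α`.
-/

open Complex

lemma key_exp (α θ : ℝ) (hc : Real.cos (α/2) ≠ 0) :
    Complex.exp ((θ:ℂ)*Complex.I) - Complex.exp (((α - θ:ℝ):ℂ)*Complex.I) =
      (Complex.I + Complex.exp (((α + Real.pi/2 :ℝ):ℂ)*Complex.I)) *
        ((Real.sin θ - Real.tan (α/2) * Real.cos θ : ℝ):ℂ) := by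
  have hc' : (Real.cos (α/2) : ℂ) ≠ 0 := by exact_mod_cast hc
  have hcosα : Real.cos α = 2*Real.cos (α/2)^2 - 1 := by
    rw [← Real.cos_two_mul]; ring_nf
  have hsinα : Real.sin α = 2*Real.sin (α/2)*Real.cos (α/2) := by
    rw [← Real.sin_two_mul]; ring_nf
  have hm : (Real.sin θ - Real.tan (α/2) * Real.cos θ) * Real.cos (α/2)
      = Real.sin θ * Real.cos (α/2) - Real.sin (α/2) * Real.cos θ := by
    rw [Real.tan_eq_sin_div_cos]; field_simp
  have hmC : ((Real.sin θ - Real.tan (α/2) * Real.cos θ : ℝ):ℂ) * (Real.cos (α/2):ℂ)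
      = ((Real.sin θ * Real.cos (α/2) - Real.sin (α/2) * Real.cos θ : ℝ):ℂ) := by
    exact_mod_cast congrArg (Complex.ofReal) hm
  have pyth : (Real.sin (α/2):ℂ)^2 + (Real.cos (α/2):ℂ)^2 = 1 := by
    exact_mod_cast Real.sin_sq_add_cos_sq (α/2)
  apply mul_right_cancel₀ hc'
  rw [Complex.exp_mul_I, Complex.exp_mul_I, Complex.exp_mul_I,
    ← Complex.ofReal_cos, ← Complex.ofReal_sin, ← Complex.ofReal_cos, ← Complex.ofReal_sin,
    ← Complex.ofReal_cos, ← Complex.ofReal_sin,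
    Real.cos_add_pi_div_two, Real.sin_add_pi_div_two,
    Real.cos_sub, Real.sin_sub, mul_assoc, hmC, hcosα, hsinα]
  push_cast [-Complex.ofReal_cos, -Complex.ofReal_sin]
  linear_combination (- 2 * (Real.cos θ:ℂ) * (Real.cos (α/2):ℂ)) * pyth


theorem support_gamma_general (γ : ℂ) (hγ : γ ≠ 0)
    (hγ' : ¬(γ.re < 0 ∧ γ.im = 0)) (θ : ℝ) (Q : ℂ) (r : ℂ)
    (hr : r = (Real.sqrt ‖γ‖ : ℂ) * Complex.exp ((θ : ℂ) * Complex.I))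
    (h : r ^ 2 - Q * r - γ = 0) :
    Q = (Real.sqrt ‖γ‖ : ℂ) *
        (Complex.I + Complex.exp (((γ.arg + Real.pi / 2 : ℝ) : ℂ) * Complex.I)) *
        ((Real.sin θ - Real.tan (γ.arg / 2) * Real.cos θ : ℝ) : ℂ) ∧
      Complex.I + Complex.exp (((γ.arg + Real.pi / 2 : ℝ) : ℂ) * Complex.I) ≠ 0 ∧
      ∃ t : ℝ, Q = (t : ℂ) *
        (Complex.I + Complex.exp (((γ.arg + Real.pi / 2 : ℝ) : ℂ) * Complex.I)) := by
  set s := Real.sqrt ‖γ‖ with hs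
  set α := γ.arg with hα
  have hspos : 0 < s := Real.sqrt_pos.mpr (norm_pos_iff.mpr hγ)
  have hα1 : -Real.pi < α := Complex.neg_pi_lt_arg γ
  have hα2 : α < Real.pi :=
    lt_of_le_of_ne (Complex.arg_le_pi γ) fun he => hγ' (Complex.arg_eq_pi_iff.mp he)
  have hcos : 0 < Real.cos (α/2) :=
    Real.cos_pos_of_mem_Ioo ⟨by linarith, by linarith⟩
  have hγeq : γ = (s:ℂ)^2 * Complex.exp ((α:ℂ) * Complex.I) := by
    have h1 := Complex.norm_mul_exp_arg_mul_I γ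
    have h2 : ((s^2 : ℝ) : ℂ) = ((‖γ‖ : ℝ) : ℂ) := by
      norm_cast
      exact Real.sq_sqrt (norm_nonneg γ)
    rw [← h1, ← hα]
    push_cast at h2 ⊢
    rw [h2]
  have hrne : r ≠ 0 := by
    rw [hr]
    exact mul_ne_zero (by exact_mod_cast hspos.ne') (Complex.exp_ne_zero _)
  have e1 : Complex.exp (((α - θ:ℝ):ℂ) * Complex.I) * Complex.exp ((θ:ℂ)*Complex.I)
      = Complex.exp ((α:ℂ) * Complex.I) := by
    rw [← Complex.exp_add]; push_cast; ring_nf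
  have hQ : Q = (s:ℂ) * (Complex.exp ((θ:ℂ)*Complex.I)
      - Complex.exp (((α - θ:ℝ):ℂ) * Complex.I)) := by
    apply mul_right_cancel₀ hrne
    rw [hr] at h ⊢
    linear_combination -h + (s:ℂ)^2 * e1 - hγeq
  have hkey := key_exp α θ hcos.ne'
  have hmain : Q = (s:ℂ) * (Complex.I + Complex.exp (((α + Real.pi/2 :ℝ):ℂ)*Complex.I)) *
      ((Real.sin θ - Real.tan (α/2) * Real.cos θ : ℝ):ℂ) := by
    rw [hQ, hkey]; ring
  refine ⟨hmain, ?_, ?_⟩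
  · intro h0
    have he : (Complex.exp (((α + Real.pi/2 :ℝ):ℂ) * Complex.I)).im
        = Real.sin (α + Real.pi/2) := Complex.exp_ofReal_mul_I_im _
    have him := congrArg Complex.im h0
    rw [Complex.add_im, he, Complex.I_im, Real.sin_add_pi_div_two, Complex.zero_im] at him
    have hc2 : Real.cos α = 2*Real.cos (α/2)^2 - 1 := by rw [← Real.cos_two_mul]; ring_nf
    nlinarith [him, hc2, hcos]
  · refine ⟨s * (Real.sin θ - Real.tan (α/2) * Real.cos θ), ?_⟩
    rw [hmain]; push_cast; ring
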